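/- Reverse one-sided log bound: under the same Lipschitz assumption in the form |p(y|θ) − p(y|θ₀)| ≤ C·p(y|θ)·‖θ − θ₀‖ a.s., one has (log(p(y|θ₀)/E[p(y|θ)]))₊ ≤ log(1 + C·E[‖θ − θ₀‖]) ≤ C·E[‖θ − θ₀‖]. -/

import Mathlib

open MeasureTheory

/-- Reverse one-sided log bound: if `|p(θω) − p(θ₀)| ≤ C p(θω)‖θω − θ₀‖` a.s.,
then `(log(p(θ₀)/E[p(θ)]))₊ ≤ log(1 + C·E‖θ − θ₀‖) ≤ C·E‖θ − θ₀‖`. -/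
theorem reverse_one_sided_log_bound (d : ℕ)
    {Ω : Type*} [MeasurableSpace Ω] (μ : Measure Ω) [IsProbabilityMeasure μ]
    (p : EuclideanSpace ℝ (Fin d) → ℝ) (θ : Ω → EuclideanSpace ℝ (Fin d))
    (θ₀ : EuclideanSpace ℝ (Fin d)) (C : ℝ) (hC : 0 ≤ C)
    (hpos : ∀ x, 0 < p x) (M : ℝ) (hbdd : ∀ x, p x ≤ M)
    (hintp : Integrable (fun ω => p (θ ω)) μ)
    (hintr : Integrable (fun ω => p θ₀ / p (θ ω)) μ)
    (hintθ : Integrable (fun ω => ‖θ ω - θ₀‖) μ)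
    (hLip : ∀ᵐ ω ∂μ, |p (θ ω) - p θ₀| ≤ C * p (θ ω) * ‖θ ω - θ₀‖) :
    max (Real.log (p θ₀ / ∫ ω, p (θ ω) ∂μ)) 0
        ≤ Real.log (1 + C * ∫ ω, ‖θ ω - θ₀‖ ∂μ)
    ∧ Real.log (1 + C * ∫ ω, ‖θ ω - θ₀‖ ∂μ)
        ≤ C * ∫ ω, ‖θ ω - θ₀‖ ∂μ := by
  set c : ℝ := ∫ ω, p (θ ω) ∂μ with hc_def
  set I : ℝ := ∫ ω, ‖θ ω - θ₀‖ ∂μ with hI_def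
  have hI0 : 0 ≤ I := integral_nonneg fun ω => norm_nonneg _
  have hCI : 0 ≤ C * I := mul_nonneg hC hI0
  have hc : 0 < c := by
    rw [hc_def, integral_pos_iff_support_of_nonneg_ae
      (Filter.Eventually.of_forall fun ω => (hpos (θ ω)).le) hintp]
    have : Function.support (fun ω => p (θ ω)) = Set.univ := by
      ext ω; simp [Function.support, (hpos (θ ω)).ne']
    rw [this]
    simp
  have hp0 : 0 < p θ₀ := hpos θ₀
  -- integrability of 1/p∘θ
  have hinv : Integrable (fun ω => (p (θ ω))⁻¹) μ := by
    have := hintr.const_mul (p θ₀)⁻¹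
    refine this.congr (Filter.Eventually.of_forall fun ω => ?_)
    field_simp
  -- tangent line: 1/c ≤ ∫ 1/p
  have hJensen : c⁻¹ ≤ ∫ ω, (p (θ ω))⁻¹ ∂μ := by
    have hmono : ∫ ω, (2 / c - p (θ ω) / c ^ 2) ∂μ ≤ ∫ ω, (p (θ ω))⁻¹ ∂μ := by
      refine integral_mono ((integrable_const (2 / c)).sub (hintp.div_const _)) hinv
        fun ω => ?_
      have hx := hpos (θ ω)
      have hnum : 2 * p (θ ω) * c - p (θ ω) ^ 2 ≤ c ^ 2 := by
        nlinarith [sq_nonneg (p (θ ω) - c)]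
      calc 2 / c - p (θ ω) / c ^ 2
          = (2 * p (θ ω) * c - p (θ ω) ^ 2) / (p (θ ω) * c ^ 2) := by
            field_simp; try ring
        _ ≤ c ^ 2 / (p (θ ω) * c ^ 2) := by gcongr
        _ = (p (θ ω))⁻¹ := by field_simp; try ring
    calc c⁻¹ = ∫ ω, (2 / c - p (θ ω) / c ^ 2) ∂μ := by
          rw [integral_sub (integrable_const _) (hintp.div_const _),
            integral_const, integral_div, ← hc_def]
          simp only [probReal_univ, ENNReal.toReal_one, smul_eq_mul, one_mul]
          field_simp
          ring
      _ ≤ _ := hmono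
  -- pointwise bound
  have hptwise : ∀ᵐ ω ∂μ, p θ₀ / p (θ ω) ≤ 1 + C * ‖θ ω - θ₀‖ := by
    filter_upwards [hLip] with ω h
    have hx := hpos (θ ω)
    have h1 : p θ₀ - p (θ ω) ≤ C * p (θ ω) * ‖θ ω - θ₀‖ := by
      have := abs_le.mp h
      linarith [this.1]
    rw [div_le_iff₀ hx]
    nlinarith
  have h3 : ∫ ω, p θ₀ / p (θ ω) ∂μ ≤ 1 + C * I := by
    have : ∫ ω, p θ₀ / p (θ ω) ∂μ ≤ ∫ ω, (1 + C * ‖θ ω - θ₀‖) ∂μ :=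
      integral_mono_ae hintr ((integrable_const 1).add (hintθ.const_mul C)) hptwise
    calc ∫ ω, p θ₀ / p (θ ω) ∂μ ≤ ∫ ω, (1 + C * ‖θ ω - θ₀‖) ∂μ := this
      _ = 1 + C * I := by
          rw [integral_add (integrable_const 1) (hintθ.const_mul C),
            integral_const, integral_const_mul, ← hI_def]
          simp
  have h4 : p θ₀ / c ≤ 1 + C * I := by
    have : p θ₀ / c = p θ₀ * c⁻¹ := div_eq_mul_inv _ _
    rw [this]
    calc p θ₀ * c⁻¹ ≤ p θ₀ * ∫ ω, (p (θ ω))⁻¹ ∂μ := by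
          exact mul_le_mul_of_nonneg_left hJensen hp0.le
      _ = ∫ ω, p θ₀ / p (θ ω) ∂μ := by
          rw [← integral_const_mul]
          exact integral_congr_ae (Filter.Eventually.of_forall fun ω => by
            simp [div_eq_mul_inv])
      _ ≤ 1 + C * I := h3
  constructor
  · have hlog0 : (0:ℝ) ≤ Real.log (1 + C * I) :=
      Real.log_nonneg (by linarith)
    refine max_le ?_ hlog0
    exact Real.log_le_log (by positivity) h4
  · have := Real.log_le_sub_one_of_pos (show (0:ℝ) < 1 + C * I by linarith)
    linarith
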